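/- The number of configurations of the n²-puzzle is (n²)!, and for n ≥ 3 the reachable set from any configuration has cardinality (n²)! (all configurations are reachable). -/

import Mathlib

/-- The `n × n` grid graph: vertices `Fin n × Fin n`, edges between vertices at
`L₁`-distance `1`. -/
def gridGraph (n : ℕ) : SimpleGraph (Fin n × Fin n) :=
  SimpleGraph.fromRel fun a b => Nat.dist a.1.1 b.1.1 + Nat.dist a.2.1 b.2.1 = 1

/-- A legal single-step move of the fully occupied graph `G`: a permutation `σ` of the
vertices such that every robot stays put or moves along an edge, and no two robots swap
along an edge (no head-on collision).  Equivalently (since `σ` is a bijection), `σ`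
synchronously rotates the robots along a collection of vertex-disjoint cycles of `G`
(of length at least 3) and fixes all other robots. -/
def LegalMove {V : Type*} (G : SimpleGraph V) (σ : Equiv.Perm V) : Prop :=
  (∀ v, σ v = v ∨ G.Adj v (σ v)) ∧ ∀ v, σ v ≠ v → σ (σ v) ≠ v

/-- One legal move between configurations (bijections from robots to vertices). -/
def Step {R V : Type*} (G : SimpleGraph V) (c c' : R ≃ V) : Prop :=
  ∃ σ : Equiv.Perm V, LegalMove G σ ∧ c' = c.trans σ

namespace Stmt8Aux

open Equiv Equiv.Perm

variable {V : Type*} [DecidableEq V]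

/-- The 4-cycle `a ↦ b ↦ c ↦ d ↦ a`. -/
def cyc4 (a b c d : V) : Equiv.Perm V :=
  Equiv.swap a d * Equiv.swap a c * Equiv.swap a b

section cyc4

variable {a b c d : V} (hab : a ≠ b) (hac : a ≠ c) (had : a ≠ d)
    (hbc : b ≠ c) (hbd : b ≠ d) (hcd : c ≠ d)

include hab hac had hbc hbd hcd

lemma cyc4_a : cyc4 a b c d a = b := by
  simp only [cyc4, Equiv.Perm.mul_apply]
  rw [Equiv.swap_apply_left, Equiv.swap_apply_of_ne_of_ne hab.symm hbc,
    Equiv.swap_apply_of_ne_of_ne hab.symm hbd]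

lemma cyc4_b : cyc4 a b c d b = c := by
  simp only [cyc4, Equiv.Perm.mul_apply]
  rw [Equiv.swap_apply_right, Equiv.swap_apply_left,
    Equiv.swap_apply_of_ne_of_ne hac.symm hcd]

lemma cyc4_c : cyc4 a b c d c = d := by
  simp only [cyc4, Equiv.Perm.mul_apply]
  rw [Equiv.swap_apply_of_ne_of_ne hac.symm hbc.symm, Equiv.swap_apply_right,
    Equiv.swap_apply_left]

lemma cyc4_d : cyc4 a b c d d = a := by
  simp only [cyc4, Equiv.Perm.mul_apply]
  rw [Equiv.swap_apply_of_ne_of_ne had.symm hbd.symm,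
    Equiv.swap_apply_of_ne_of_ne had.symm hcd.symm, Equiv.swap_apply_right]

lemma cyc4_other {v : V} (h1 : v ≠ a) (h2 : v ≠ b) (h3 : v ≠ c) (h4 : v ≠ d) :
    cyc4 a b c d v = v := by
  simp only [cyc4, Equiv.Perm.mul_apply]
  rw [Equiv.swap_apply_of_ne_of_ne h1 h2, Equiv.swap_apply_of_ne_of_ne h1 h3,
    Equiv.swap_apply_of_ne_of_ne h1 h4]

lemma legal_cyc4 {G : SimpleGraph V}
    (Gab : G.Adj a b) (Gbc : G.Adj b c) (Gcd : G.Adj c d) (Gda : G.Adj d a) :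
    LegalMove G (cyc4 a b c d) := by
  have ka := cyc4_a hab hac had hbc hbd hcd
  have kb := cyc4_b hab hac had hbc hbd hcd
  have kc := cyc4_c hab hac had hbc hbd hcd
  have kd := cyc4_d hab hac had hbc hbd hcd
  have ko := fun v h1 h2 h3 h4 => cyc4_other hab hac had hbc hbd hcd (v := v) h1 h2 h3 h4
  constructor
  · intro v
    rcases eq_or_ne v a with rfl | h1
    · right; rw [ka]; exact Gab
    rcases eq_or_ne v b with rfl | h2
    · right; rw [kb]; exact Gbc
    rcases eq_or_ne v c with rfl | h3
    · right; rw [kc]; exact Gcd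
    rcases eq_or_ne v d with rfl | h4
    · right; rw [kd]; exact Gda
    · exact Or.inl (ko v h1 h2 h3 h4)
  · intro v hv
    rcases eq_or_ne v a with rfl | h1
    · rw [ka, kb]; exact hac.symm
    rcases eq_or_ne v b with rfl | h2
    · rw [kb, kc]; exact hbd.symm
    rcases eq_or_ne v c with rfl | h3
    · rw [kc, kd]; exact hac
    rcases eq_or_ne v d with rfl | h4
    · rw [kd, ka]; exact hbd
    · exact absurd (ko v h1 h2 h3 h4) hv

end cyc4

lemma viaEmbedding_swap {α β : Type*} [DecidableEq α] [DecidableEq β] (ι : α ↪ β) (i j : α) :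
    (Equiv.swap i j).viaEmbedding ι = Equiv.swap (ι i) (ι j) := by
  ext v
  by_cases hv : v ∈ Set.range ι
  · obtain ⟨x, rfl⟩ := hv
    rw [Equiv.Perm.viaEmbedding_apply]
    rcases eq_or_ne x i with rfl | hxi
    · simp
    rcases eq_or_ne x j with rfl | hxj
    · simp
    · rw [Equiv.swap_apply_of_ne_of_ne hxi hxj,
        Equiv.swap_apply_of_ne_of_ne (fun h => hxi (ι.injective h))
          (fun h => hxj (ι.injective h))]
  · rw [Equiv.Perm.viaEmbedding_apply_of_notMem _ _ _ hv,
      Equiv.swap_apply_of_ne_of_ne (fun h => hv ⟨i, h.symm⟩) (fun h => hv ⟨j, h.symm⟩)]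

lemma viaEmbedding_cyc4 {α β : Type*} [DecidableEq α] [DecidableEq β] (ι : α ↪ β)
    (x y z w : α) :
    Equiv.Perm.viaEmbeddingHom ι (cyc4 x y z w) = cyc4 (ι x) (ι y) (ι z) (ι w) := by
  simp only [cyc4, map_mul, Equiv.Perm.viaEmbeddingHom_apply, viaEmbedding_swap]

/-- The subgroup of permutations generated by legal moves. -/
def H {V : Type*} (G : SimpleGraph V) : Subgroup (Equiv.Perm V) :=
  Subgroup.closure {σ | LegalMove G σ}

abbrev T := Fin 3 × Fin 3

def pA : Perm T := cyc4 (0,0) (0,1) (1,1) (1,0)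
def pB : Perm T := cyc4 (0,1) (0,2) (1,2) (1,1)
def pC : Perm T := cyc4 (1,0) (1,1) (2,1) (2,0)

lemma word1 : Equiv.swap ((0,0) : T) (0,1) = pC⁻¹ * pB * pC * pB⁻¹ * pA⁻¹ := by decide

lemma word2 : Equiv.swap ((1,0) : T) (1,1) = pA⁻¹ * pB * pC⁻¹ * pB⁻¹ * pC * pA * pA := by
  decide

/-- Key lemma: given an embedded `3 × 3` grid pattern in `G`, the swaps of the first two
entries of the first and second rows are generated by legal moves. -/
lemma swap_mem_of_pattern {G : SimpleGraph V} (p : Fin 3 → Fin 3 → V)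
    (hinj : Function.Injective fun x : T => p x.1 x.2)
    (hadj : ∀ i j i' j' : Fin 3, Nat.dist i.1 i'.1 + Nat.dist j.1 j'.1 = 1 →
      G.Adj (p i j) (p i' j')) :
    Equiv.swap (p 0 0) (p 0 1) ∈ H G ∧ Equiv.swap (p 1 0) (p 1 1) ∈ H G := by
  set ι : T ↪ V := ⟨fun x => p x.1 x.2, hinj⟩ with hι
  have hne : ∀ x y : T, x ≠ y → ι x ≠ ι y := fun x y h hh => h (hinj hh)
  have φA : Equiv.Perm.viaEmbeddingHom ι pA = cyc4 (p 0 0) (p 0 1) (p 1 1) (p 1 0) :=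
    viaEmbedding_cyc4 ι _ _ _ _
  have φB : Equiv.Perm.viaEmbeddingHom ι pB = cyc4 (p 0 1) (p 0 2) (p 1 2) (p 1 1) :=
    viaEmbedding_cyc4 ι _ _ _ _
  have φC : Equiv.Perm.viaEmbeddingHom ι pC = cyc4 (p 1 0) (p 1 1) (p 2 1) (p 2 0) :=
    viaEmbedding_cyc4 ι _ _ _ _
  have hmemA : Equiv.Perm.viaEmbeddingHom ι pA ∈ H G := by
    rw [φA]
    exact Subgroup.subset_closure (legal_cyc4
      (hne (0,0) (0,1) (by decide)) (hne (0,0) (1,1) (by decide)) (hne (0,0) (1,0) (by decide))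
      (hne (0,1) (1,1) (by decide)) (hne (0,1) (1,0) (by decide)) (hne (1,1) (1,0) (by decide))
      (hadj 0 0 0 1 (by decide)) (hadj 0 1 1 1 (by decide))
      (hadj 1 1 1 0 (by decide)) (hadj 1 0 0 0 (by decide)))
  have hmemB : Equiv.Perm.viaEmbeddingHom ι pB ∈ H G := by
    rw [φB]
    exact Subgroup.subset_closure (legal_cyc4
      (hne (0,1) (0,2) (by decide)) (hne (0,1) (1,2) (by decide)) (hne (0,1) (1,1) (by decide))
      (hne (0,2) (1,2) (by decide)) (hne (0,2) (1,1) (by decide)) (hne (1,2) (1,1) (by decide))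
      (hadj 0 1 0 2 (by decide)) (hadj 0 2 1 2 (by decide))
      (hadj 1 2 1 1 (by decide)) (hadj 1 1 0 1 (by decide)))
  have hmemC : Equiv.Perm.viaEmbeddingHom ι pC ∈ H G := by
    rw [φC]
    exact Subgroup.subset_closure (legal_cyc4
      (hne (1,0) (1,1) (by decide)) (hne (1,0) (2,1) (by decide)) (hne (1,0) (2,0) (by decide))
      (hne (1,1) (2,1) (by decide)) (hne (1,1) (2,0) (by decide)) (hne (2,1) (2,0) (by decide))
      (hadj 1 0 1 1 (by decide)) (hadj 1 1 2 1 (by decide))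
      (hadj 2 1 2 0 (by decide)) (hadj 2 0 1 0 (by decide)))
  constructor
  · have : Equiv.swap (p 0 0) (p 0 1) =
        Equiv.Perm.viaEmbeddingHom ι (Equiv.swap ((0,0) : T) (0,1)) := by
      rw [Equiv.Perm.viaEmbeddingHom_apply, viaEmbedding_swap]
      rfl
    rw [this, word1, map_mul, map_mul, map_mul, map_mul, map_inv, map_inv, map_inv]
    exact mul_mem (mul_mem (mul_mem (mul_mem (inv_mem hmemC) hmemB) hmemC)
      (inv_mem hmemB)) (inv_mem hmemA)
  · have : Equiv.swap (p 1 0) (p 1 1) =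
        Equiv.Perm.viaEmbeddingHom ι (Equiv.swap ((1,0) : T) (1,1)) := by
      rw [Equiv.Perm.viaEmbeddingHom_apply, viaEmbedding_swap]
      rfl
    rw [this, word2]
    simp only [map_mul, map_inv]
    exact mul_mem (mul_mem (mul_mem (mul_mem (mul_mem (mul_mem (inv_mem hmemA) hmemB)
      (inv_mem hmemC)) (inv_mem hmemB)) hmemC) hmemA) hmemA

section grid

variable {n : ℕ}

lemma grid_adj {u v : Fin n × Fin n}
    (h : Nat.dist u.1.1 v.1.1 + Nat.dist u.2.1 v.2.1 = 1) : (gridGraph n).Adj u v := by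
  rw [gridGraph, SimpleGraph.fromRel_adj]
  refine ⟨?_, Or.inl h⟩
  rintro rfl
  simp [Nat.dist_self] at h

/-- A distance-preserving injection `Fin 3 → Fin n` whose 0th or 1st value is `x`. -/
lemma exists_line (hn : 3 ≤ n) (x : Fin n) :
    ∃ κ : Fin 3 → Fin n, (∀ s t : Fin 3, Nat.dist (κ s).1 (κ t).1 = Nat.dist s.1 t.1) ∧
      (κ 0 = x ∨ κ 1 = x) := by
  rcases eq_or_ne x.1 0 with h0 | h0
  · refine ⟨fun t => ⟨t.1, by omega⟩, fun s t => rfl, Or.inl (Fin.ext (by simp [h0]))⟩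
  rcases lt_or_ge (x.1 + 1) n with h1 | h1
  · refine ⟨fun t => ⟨x.1 - 1 + t.1, by omega⟩, fun s t => ?_, Or.inr (Fin.ext (by
      simp; omega))⟩
    simp [Nat.dist]; omega
  · -- x = n - 1, so x ≥ 2
    refine ⟨fun t => ⟨x.1 - t.1, by omega⟩, fun s t => ?_, Or.inl (Fin.ext (by simp))⟩
    have hx : 2 ≤ x.1 := by omega
    simp [Nat.dist]; omega

/-- A distance-preserving injection `Fin 3 → Fin n` starting with `x, y` or `y, x`. -/
lemma exists_edge_line (hn : 3 ≤ n) (x y : Fin n) (hxy : Nat.dist x.1 y.1 = 1) :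
    ∃ κ : Fin 3 → Fin n, (∀ s t : Fin 3, Nat.dist (κ s).1 (κ t).1 = Nat.dist s.1 t.1) ∧
      ((κ 0 = x ∧ κ 1 = y) ∨ (κ 0 = y ∧ κ 1 = x)) := by
  have main : ∀ x y : Fin n, x.1 + 1 = y.1 →
      ∃ κ : Fin 3 → Fin n, (∀ s t : Fin 3, Nat.dist (κ s).1 (κ t).1 = Nat.dist s.1 t.1) ∧
        ((κ 0 = x ∧ κ 1 = y) ∨ (κ 0 = y ∧ κ 1 = x)) := by
    intro x y hxy1
    rcases lt_or_ge (y.1 + 1) n with h1 | h1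
    · refine ⟨fun t => ⟨x.1 + t.1, by omega⟩, fun s t => ?_,
        Or.inl ⟨Fin.ext (by simp), Fin.ext (by simp; omega)⟩⟩
      simp [Nat.dist]; omega
    · have hy2 : 2 ≤ y.1 := by omega
      refine ⟨fun t => ⟨y.1 - t.1, by omega⟩, fun s t => ?_,
        Or.inr ⟨Fin.ext (by simp), Fin.ext (by simp; omega)⟩⟩
      simp [Nat.dist]; omega
  rcases lt_or_ge x.1 y.1 with h | h
  · exact main x y (by simp [Nat.dist] at hxy; omega)
  · obtain ⟨κ, h1, h2⟩ := main y x (by simp [Nat.dist] at hxy; omega)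
    exact ⟨κ, h1, h2.symm⟩

lemma fin3_dist_eq_zero {s t : Fin 3} (h : Nat.dist s.1 t.1 = 0) : s = t :=
  Fin.ext (Nat.eq_of_dist_eq_zero h)

lemma swap_adj_mem (hn : 3 ≤ n) {u v : Fin n × Fin n} (h : (gridGraph n).Adj u v) :
    Equiv.swap u v ∈ H (gridGraph n) := by
  have hdist : Nat.dist u.1.1 v.1.1 + Nat.dist u.2.1 v.2.1 = 1 := by
    rw [gridGraph, SimpleGraph.fromRel_adj] at h
    rcases h.2 with h' | h'
    · exact h'
    · rw [Nat.dist_comm u.1.1, Nat.dist_comm u.2.1]; exact h'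
  have hcase : (Nat.dist u.1.1 v.1.1 = 0 ∧ Nat.dist u.2.1 v.2.1 = 1) ∨
      (Nat.dist u.1.1 v.1.1 = 1 ∧ Nat.dist u.2.1 v.2.1 = 0) := by omega
  rcases hcase with ⟨hr, hc⟩ | ⟨hr, hc⟩
  · -- horizontal edge: same row
    have hrow : u.1 = v.1 := Fin.ext (Nat.eq_of_dist_eq_zero hr)
    obtain ⟨ρ, hρ, hρx⟩ := exists_line hn u.1
    obtain ⟨κ, hκ, hκx⟩ := exists_edge_line hn u.2 v.2 hc
    set p : Fin 3 → Fin 3 → Fin n × Fin n := fun i j => (ρ i, κ j) with hp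
    have hinj : Function.Injective fun x : T => p x.1 x.2 := by
      rintro ⟨i, j⟩ ⟨i', j'⟩ hh
      simp only [hp, Prod.mk.injEq] at hh
      have h1 : i = i' := fin3_dist_eq_zero (by rw [← hρ]; simp [hh.1, Nat.dist_self])
      have h2 : j = j' := fin3_dist_eq_zero (by rw [← hκ]; simp [hh.2, Nat.dist_self])
      simp [h1, h2]
    have hadj : ∀ i j i' j' : Fin 3, Nat.dist i.1 i'.1 + Nat.dist j.1 j'.1 = 1 →
        (gridGraph n).Adj (p i j) (p i' j') := by
      intro i j i' j' hd
      exact grid_adj (by simp only [hp]; rw [hρ, hκ]; exact hd)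
    obtain ⟨hs0, hs1⟩ := swap_mem_of_pattern p hinj hadj
    have huv : u = (u.1, u.2) := rfl
    have hvv : v = (u.1, v.2) := by rw [hrow]
    rcases hρx with hρ0 | hρ0 <;> rcases hκx with ⟨hk0, hk1⟩ | ⟨hk0, hk1⟩
    · convert hs0 using 2 <;> simp [hp, hρ0, hk0, hk1, hvv.symm]
    · rw [Equiv.swap_comm]; convert hs0 using 2 <;> simp [hp, hρ0, hk0, hk1, hvv.symm]
    · convert hs1 using 2 <;> simp [hp, hρ0, hk0, hk1, hvv.symm]
    · rw [Equiv.swap_comm]; convert hs1 using 2 <;> simp [hp, hρ0, hk0, hk1, hvv.symm]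
  · -- vertical edge: same column
    have hcol : u.2 = v.2 := Fin.ext (Nat.eq_of_dist_eq_zero hc)
    obtain ⟨ρ, hρ, hρx⟩ := exists_line hn u.2
    obtain ⟨κ, hκ, hκx⟩ := exists_edge_line hn u.1 v.1 hr
    set p : Fin 3 → Fin 3 → Fin n × Fin n := fun i j => (κ j, ρ i) with hp
    have hinj : Function.Injective fun x : T => p x.1 x.2 := by
      rintro ⟨i, j⟩ ⟨i', j'⟩ hh
      simp only [hp, Prod.mk.injEq] at hh
      have h1 : i = i' := fin3_dist_eq_zero (by rw [← hρ]; simp [hh.2, Nat.dist_self])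
      have h2 : j = j' := fin3_dist_eq_zero (by rw [← hκ]; simp [hh.1, Nat.dist_self])
      simp [h1, h2]
    have hadj : ∀ i j i' j' : Fin 3, Nat.dist i.1 i'.1 + Nat.dist j.1 j'.1 = 1 →
        (gridGraph n).Adj (p i j) (p i' j') := by
      intro i j i' j' hd
      exact grid_adj (by simp only [hp]; rw [hρ, hκ]; omega)
    obtain ⟨hs0, hs1⟩ := swap_mem_of_pattern p hinj hadj
    have hvv : v = (v.1, u.2) := by rw [hcol]
    rcases hρx with hρ0 | hρ0 <;> rcases hκx with ⟨hk0, hk1⟩ | ⟨hk0, hk1⟩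
    · convert hs0 using 2 <;> simp [hp, hρ0, hk0, hk1, hvv.symm]
    · rw [Equiv.swap_comm]; convert hs0 using 2 <;> simp [hp, hρ0, hk0, hk1, hvv.symm]
    · convert hs1 using 2 <;> simp [hp, hρ0, hk0, hk1, hvv.symm]
    · rw [Equiv.swap_comm]; convert hs1 using 2 <;> simp [hp, hρ0, hk0, hk1, hvv.symm]

lemma swap_mem_all (hn : 3 ≤ n) (u v : Fin n × Fin n) (huv : u ≠ v) :
    Equiv.swap u v ∈ H (gridGraph n) := by
  suffices key : ∀ d (u v : Fin n × Fin n), u ≠ v →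
      Nat.dist u.1.1 v.1.1 + Nat.dist u.2.1 v.2.1 = d → Equiv.swap u v ∈ H (gridGraph n) by
    exact key _ u v huv rfl
  intro d
  induction d using Nat.strong_induction_on with
  | _ d ih =>
    intro u v huv hd
    have hd1 : 1 ≤ d := by
      rcases Nat.eq_zero_or_pos d with rfl | h
      · exfalso
        apply huv
        have h1 : u.1 = v.1 := Fin.ext (Nat.eq_of_dist_eq_zero (by omega))
        have h2 : u.2 = v.2 := Fin.ext (Nat.eq_of_dist_eq_zero (by omega))
        exact Prod.ext h1 h2
      · exact h
    rcases eq_or_lt_of_le hd1 with h1 | h2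
    · exact swap_adj_mem hn (grid_adj (by omega))
    · -- d ≥ 2 : find w adjacent to v, closer to u
      have : ∃ w : Fin n × Fin n, Nat.dist v.1.1 w.1.1 + Nat.dist v.2.1 w.2.1 = 1 ∧
          Nat.dist u.1.1 w.1.1 + Nat.dist u.2.1 w.2.1 = d - 1 := by
        rcases lt_trichotomy u.1.1 v.1.1 with h | h | h
        · refine ⟨(⟨v.1.1 - 1, by omega⟩, v.2), ?_, ?_⟩ <;> simp [Nat.dist] at hd ⊢ <;> omega
        · -- rows equal; columns differ
          have hc : Nat.dist u.2.1 v.2.1 = d := by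
            simp [Nat.dist] at hd ⊢; omega
          rcases lt_or_ge u.2.1 v.2.1 with h' | h'
          · refine ⟨(v.1, ⟨v.2.1 - 1, by omega⟩), ?_, ?_⟩ <;>
              simp [Nat.dist] at hd ⊢ <;> omega
          · have h'' : v.2.1 < u.2.1 := by simp [Nat.dist] at hc; omega
            refine ⟨(v.1, ⟨v.2.1 + 1, by omega⟩), ?_, ?_⟩ <;>
              simp [Nat.dist] at hd ⊢ <;> omega
        · refine ⟨(⟨v.1.1 + 1, by omega⟩, v.2), ?_, ?_⟩ <;> simp [Nat.dist] at hd ⊢ <;> omega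
      obtain ⟨w, hvw, huw⟩ := this
      have hswap_vw : Equiv.swap v w ∈ H (gridGraph n) := swap_adj_mem hn (grid_adj hvw)
      have huw_ne : u ≠ w := by
        rintro rfl
        simp [Nat.dist_self] at huw
        omega
      have hswap_uw : Equiv.swap u w ∈ H (gridGraph n) := ih (d - 1) (by omega) u w huw_ne huw
      have hvw_ne : v ≠ w := by
        rintro rfl
        simp [Nat.dist_self] at hvw
      -- swap w v * swap u w * swap w v = swap v u
      have : Equiv.swap u v = Equiv.swap w v * Equiv.swap u w * Equiv.swap w v := by
        rw [Equiv.swap_mul_swap_mul_swap huw_ne huv, Equiv.swap_comm]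
      rw [this]
      exact mul_mem (mul_mem (Equiv.swap_comm v w ▸ hswap_vw) hswap_uw)
        (Equiv.swap_comm v w ▸ hswap_vw)

lemma closure_eq_top (hn : 3 ≤ n) : H (gridGraph n) = ⊤ := by
  rw [eq_top_iff, ← Equiv.Perm.closure_isSwap, Subgroup.closure_le]
  rintro σ ⟨x, y, hxy, rfl⟩
  exact swap_mem_all hn x y hxy

end grid

section reach

variable {R V : Type*} {G : SimpleGraph V}

lemma legal_inv {σ : Equiv.Perm V} (h : LegalMove G σ) : LegalMove G σ⁻¹ := by
  obtain ⟨h1, h2⟩ := h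
  refine ⟨fun v => ?_, fun v hv hcon => ?_⟩
  · rcases h1 (σ⁻¹ v) with h | h
    · left
      have h' : σ⁻¹ v = v := by simpa using h.symm
      exact h' 
    · right
      rw [show ∀ x, σ (σ⁻¹ x) = x from Equiv.apply_symm_apply σ] at h
      exact h.symm
  · have hσv : σ (σ⁻¹ v) = v := Equiv.apply_symm_apply σ v
    have key : σ (σ (σ⁻¹ v)) ≠ σ⁻¹ v := h2 _ (by rw [hσv]; exact Ne.symm hv)
    rw [hσv] at key
    apply key
    have := congrArg σ hcon
    rw [show ∀ x, σ (σ⁻¹ x) = x from Equiv.apply_symm_apply σ] at this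
    exact this.symm

lemma step_symm : Symmetric (Step G (R := R)) := by
  rintro c c' ⟨σ, hσ, rfl⟩
  refine ⟨σ⁻¹, legal_inv hσ, ?_⟩
  ext r
  simp

lemma reach_of_mem_closure {σ : Equiv.Perm V}
    (h : σ ∈ Subgroup.closure {σ | LegalMove G σ}) :
    ∀ c : R ≃ V, Relation.ReflTransGen (Step G) c (c.trans σ) := by
  induction h using Subgroup.closure_induction with
  | mem σ hσ => exact fun c => Relation.ReflTransGen.single ⟨σ, hσ, rfl⟩
  | one => exact fun c => by rw [show ((1 : Equiv.Perm V) : V ≃ V) = Equiv.refl V from rfl,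
      Equiv.trans_refl]
  | mul x y hx hy ihx ihy =>
    intro c
    have h1 := ihy c
    have h2 := ihx (c.trans y)
    rw [show c.trans (x * y) = (c.trans y).trans x from by
      rw [Equiv.Perm.mul_def, Equiv.trans_assoc]]
    exact h1.trans h2
  | inv x hx ihx =>
    intro c
    have h1 := ihx (c.trans x⁻¹)
    have : (c.trans x⁻¹).trans x = c := by
      rw [Equiv.trans_assoc]
      rw [show (x⁻¹ : Equiv.Perm V).trans x = Equiv.refl V from ?_, Equiv.trans_refl]
      · ext v; simp
    rw [this] at h1
    exact (@Relation.ReflTransGen.stdSymm _ _ ⟨fun a b h => step_symm h⟩).symm _ _ h1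

end reach

end Stmt8Aux

/-- The number of configurations of the `n²`-puzzle (bijections from the `n²` labeled robots
to the vertices of the `n × n` grid) is `(n²)!`, and for `n ≥ 3` the set of configurations
reachable by legal moves from any configuration also has cardinality `(n²)!`
(all configurations are reachable). -/
theorem stmt8 (n : ℕ) (hn : 3 ≤ n) :
    Nat.card (Fin (n ^ 2) ≃ Fin n × Fin n) = (n ^ 2).factorial ∧
    ∀ c : Fin (n ^ 2) ≃ Fin n × Fin n,
      Nat.card {c' : Fin (n ^ 2) ≃ Fin n × Fin n |
        Relation.ReflTransGen (Step (gridGraph n)) c c'} = (n ^ 2).factorial := by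
  have hcard : Fintype.card (Fin n × Fin n) = n ^ 2 := by
    simp [Fintype.card_prod, pow_two]
  have e : Fin (n ^ 2) ≃ Fin n × Fin n :=
    Fintype.equivOfCardEq (by simp [hcard])
  have hc1 : Nat.card (Fin (n ^ 2) ≃ Fin n × Fin n) = (n ^ 2).factorial := by
    rw [Nat.card_eq_fintype_card, Fintype.card_equiv e, Fintype.card_fin]
  refine ⟨hc1, fun c => ?_⟩
  have huniv : {c' : Fin (n ^ 2) ≃ Fin n × Fin n |
      Relation.ReflTransGen (Step (gridGraph n)) c c'} = Set.univ := by
    rw [Set.eq_univ_iff_forall]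
    intro c'
    have hmem : (c.symm.trans c' : Equiv.Perm (Fin n × Fin n)) ∈
        Stmt8Aux.H (gridGraph n) := by
      rw [Stmt8Aux.closure_eq_top hn]; trivial
    have := Stmt8Aux.reach_of_mem_closure hmem c
    have heq : c.trans (c.symm.trans c') = c' := by
      rw [← Equiv.trans_assoc, Equiv.self_trans_symm, Equiv.refl_trans]
    rwa [heq] at this
  rw [huniv]
  exact (Nat.card_congr (Equiv.Set.univ _)).trans hc1
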